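/- Symmetric Lovász local lemma with conditional bounds: Let A_1,…,A_n be events in a probability space. Suppose for every i there is a set D_i ⊆ {A_1,…,A_n} with |D_i| ≤ d such that for every subset S ⊆ {A_1,…,A_n} \ D_i (with the conditioning event having positive probability), P(A_i | ∩_{A_j∈S} A_j^c) ≤ p. If e·p·(d+1) ≤ 1, then P(∩_{i=1}^n A_i^c) > 0. -/

import Mathlib

open MeasureTheory ProbabilityTheory
open scoped ENNReal

private lemma lll_real_aux (d : ℕ) :
    (Real.exp 1 * ((d : ℝ) + 1))⁻¹ ≤ ((d : ℝ) + 2)⁻¹ * (1 - ((d : ℝ) + 2)⁻¹) ^ d := by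
  have hd1 : (0:ℝ) < (d:ℝ) + 1 := by positivity
  have hd2 : (0:ℝ) < (d:ℝ) + 2 := by positivity
  have he : (0:ℝ) < Real.exp 1 := Real.exp_pos 1
  have h1 : ((d:ℝ) + 2) / ((d:ℝ) + 1) ≤ Real.exp (((d:ℝ) + 1)⁻¹) := by
    have h := Real.add_one_le_exp (((d:ℝ) + 1)⁻¹)
    have : ((d:ℝ) + 2) / ((d:ℝ) + 1) = ((d:ℝ) + 1)⁻¹ + 1 := by field_simp; ring
    rw [this]; exact h
  have h2 : (((d:ℝ) + 2) / ((d:ℝ) + 1)) ^ (d + 1) ≤ Real.exp 1 := by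
    calc (((d:ℝ) + 2) / ((d:ℝ) + 1)) ^ (d + 1)
        ≤ (Real.exp (((d:ℝ) + 1)⁻¹)) ^ (d + 1) :=
          pow_le_pow_left₀ (by positivity) h1 _
      _ = Real.exp 1 := by
          rw [← Real.exp_nat_mul]
          congr 1
          push_cast
          field_simp
  have h3 : ((d:ℝ) + 2) ^ (d + 1) ≤ Real.exp 1 * ((d:ℝ) + 1) ^ (d + 1) := by
    rw [div_pow, div_le_iff₀ (by positivity)] at h2
    linarith
  have hsub : 1 - ((d:ℝ) + 2)⁻¹ = ((d:ℝ) + 1) / ((d:ℝ) + 2) := by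
    field_simp
    ring
  have hRHS : ((d:ℝ) + 2)⁻¹ * (((d:ℝ) + 1) / ((d:ℝ) + 2)) ^ d
      = ((d:ℝ) + 1) ^ d / ((d:ℝ) + 2) ^ (d + 1) := by
    rw [div_pow, pow_succ]
    field_simp
  rw [hsub, hRHS, inv_eq_one_div, div_le_div_iff₀ (by positivity) (by positivity)]
  calc 1 * ((d:ℝ) + 2) ^ (d + 1) = ((d:ℝ) + 2) ^ (d + 1) := one_mul _
    _ ≤ Real.exp 1 * ((d:ℝ) + 1) ^ (d + 1) := h3
    _ = ((d:ℝ) + 1) ^ d * (Real.exp 1 * ((d:ℝ) + 1)) := by rw [pow_succ]; ring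

theorem symmetricLLLConditional {Ω : Type*} [MeasurableSpace Ω]
    (μ : Measure Ω) [IsProbabilityMeasure μ]
    (n : ℕ) (A : Fin n → Set Ω) (hA : ∀ i, MeasurableSet (A i))
    (D : Fin n → Finset (Fin n)) (d : ℕ) (hD : ∀ i, (D i).card ≤ d)
    (p : ENNReal)
    (hcond : ∀ i : Fin n, ∀ S : Finset (Fin n), Disjoint S (D i) →
      0 < μ (⋂ j ∈ S, (A j)ᶜ) →
      (μ[|⋂ j ∈ S, (A j)ᶜ]) (A i) ≤ p)
    (h : ENNReal.ofReal (Real.exp 1) * p * (d + 1) ≤ 1) :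
    0 < μ (⋂ i, (A i)ᶜ) := by
  classical
  set x : ℝ≥0∞ := ((d : ℝ≥0∞) + 2)⁻¹ with hxdef
  have hd2ne0 : ((d : ℝ≥0∞) + 2) ≠ 0 := by
    have : (0:ℝ≥0∞) < (d : ℝ≥0∞) + 2 := lt_of_lt_of_le two_pos le_add_self
    exact this.ne'
  have hd2netop : ((d : ℝ≥0∞) + 2) ≠ ⊤ := by finiteness
  have hx1 : x < 1 := by
    rw [hxdef, ENNReal.inv_lt_one]
    calc (1:ℝ≥0∞) < 2 := ENNReal.one_lt_two
      _ ≤ (d : ℝ≥0∞) + 2 := le_add_self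
  have hxle : x ≤ 1 := hx1.le
  have h1x_pos : 0 < 1 - x := tsub_pos_of_lt hx1
  have h1x_le1 : (1 : ℝ≥0∞) - x ≤ 1 := tsub_le_self
  -- measurability
  have hmB : ∀ S : Finset (Fin n), MeasurableSet (⋂ j ∈ S, (A j)ᶜ) := fun S =>
    MeasurableSet.biInter (Set.to_countable _) fun j _ => (hA j).compl
  -- monotonicity
  have hBmono : ∀ {S T : Finset (Fin n)}, S ⊆ T →
      (⋂ j ∈ T, (A j)ᶜ) ⊆ ⋂ j ∈ S, (A j)ᶜ := by
    intro S T hST ω hω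
    exact Set.mem_iInter₂.mpr fun j hj => Set.mem_iInter₂.mp hω j (hST hj)
  have hBins : ∀ (i : Fin n) (T : Finset (Fin n)),
      (⋂ j ∈ insert i T, (A j)ᶜ) = (A i)ᶜ ∩ ⋂ j ∈ T, (A j)ᶜ := by
    intro i T
    simp [Set.biInter_insert]
  -- numeric bound
  have hp : p ≤ x * (1 - x) ^ d := by
    have hple : p ≤ (ENNReal.ofReal (Real.exp 1) * ((d : ℝ≥0∞) + 1))⁻¹ := by
      rw [ENNReal.le_inv_iff_mul_le]
      calc p * (ENNReal.ofReal (Real.exp 1) * ((d : ℝ≥0∞) + 1))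
          = ENNReal.ofReal (Real.exp 1) * p * ((d : ℝ≥0∞) + 1) := by ring
        _ ≤ 1 := h
    refine hple.trans ?_
    have hcast2 : ((d : ℝ≥0∞) + 2) = ENNReal.ofReal ((d : ℝ) + 2) := by
      rw [ENNReal.ofReal_add (by positivity) (by norm_num)]
      simp [ENNReal.ofReal_natCast]
    have hcast1 : ((d : ℝ≥0∞) + 1) = ENNReal.ofReal ((d : ℝ) + 1) := by
      rw [ENNReal.ofReal_add (by positivity) (by norm_num)]
      simp [ENNReal.ofReal_natCast]
    have hxR : x = ENNReal.ofReal (((d : ℝ) + 2)⁻¹) := by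
      rw [hxdef, hcast2, ← ENNReal.ofReal_inv_of_pos (by positivity)]
    have h1xR : (1 : ℝ≥0∞) - x = ENNReal.ofReal (1 - ((d : ℝ) + 2)⁻¹) := by
      rw [hxR, ENNReal.ofReal_sub _ (by positivity), ENNReal.ofReal_one]
    have hLHS : (ENNReal.ofReal (Real.exp 1) * ((d : ℝ≥0∞) + 1))⁻¹
        = ENNReal.ofReal ((Real.exp 1 * ((d : ℝ) + 1))⁻¹) := by
      rw [hcast1, ← ENNReal.ofReal_mul (le_of_lt (Real.exp_pos 1)),
        ← ENNReal.ofReal_inv_of_pos (by positivity)]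
    rw [hLHS, h1xR, hxR, ← ENNReal.ofReal_pow (by
      have : ((d : ℝ) + 2)⁻¹ ≤ 1 := by
        rw [inv_le_one_iff₀]; right; linarith [Nat.cast_nonneg (α := ℝ) d]
      linarith), ← ENNReal.ofReal_mul (by positivity)]
    exact ENNReal.ofReal_le_ofReal (lll_real_aux d)
  -- key step: from the bound on A i over T, the intersection shrinks by at most (1-x)
  have key : ∀ (i : Fin n) (T : Finset (Fin n)),
      μ (A i ∩ ⋂ j ∈ T, (A j)ᶜ) ≤ x * μ (⋂ j ∈ T, (A j)ᶜ) →
      (1 - x) * μ (⋂ j ∈ T, (A j)ᶜ) ≤ μ (⋂ j ∈ insert i T, (A j)ᶜ) := by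
    intro i T hle
    set C := ⋂ j ∈ T, (A j)ᶜ with hC
    have hsum : μ (C ∩ A i) + μ (C \ A i) = μ C := measure_inter_add_diff _ (hA i)
    have hdiff : C \ A i = ⋂ j ∈ insert i T, (A j)ᶜ := by
      rw [hBins, Set.diff_eq, Set.inter_comm]
    have hxc : x * μ C ≠ ⊤ :=
      ENNReal.mul_ne_top (lt_of_le_of_lt hxle ENNReal.one_lt_top).ne (measure_ne_top μ C)
    have hsplit : (1 - x) * μ C + x * μ C = μ C := by
      rw [← add_mul, tsub_add_cancel_of_le hxle, one_mul]
    have hstep : (1 - x) * μ C + x * μ C ≤ μ (C \ A i) + x * μ C := by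
      calc (1 - x) * μ C + x * μ C = μ C := hsplit
        _ = μ (C ∩ A i) + μ (C \ A i) := hsum.symm
        _ ≤ x * μ C + μ (C \ A i) := by
            refine add_le_add ?_ le_rfl
            rwa [Set.inter_comm] at hle
        _ = μ (C \ A i) + x * μ C := add_comm _ _
    have := (ENNReal.add_le_add_iff_right hxc).mp hstep
    rwa [hdiff] at this
  -- main induction
  have main : ∀ S : Finset (Fin n),
      0 < μ (⋂ j ∈ S, (A j)ᶜ) ∧
      ∀ i : Fin n, μ (A i ∩ ⋂ j ∈ S, (A j)ᶜ) ≤ x * μ (⋂ j ∈ S, (A j)ᶜ) := by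
    intro S
    induction S using Finset.strongInduction with
    | _ S ih =>
      have hpos : 0 < μ (⋂ j ∈ S, (A j)ᶜ) := by
        rcases S.eq_empty_or_nonempty with rfl | ⟨i, hi⟩
        · have : (⋂ j ∈ (∅ : Finset (Fin n)), (A j)ᶜ) = Set.univ := by simp
          rw [this, measure_univ]
          exact zero_lt_one
        · obtain ⟨hpos', hbd'⟩ := ih (S.erase i) (Finset.erase_ssubset hi)
          have h2 := key i (S.erase i) (hbd' i)
          have h3 : 0 < (1 - x) * μ (⋂ j ∈ S.erase i, (A j)ᶜ) :=
            ENNReal.mul_pos h1x_pos.ne' hpos'.ne'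
          have h4 : (⋂ j ∈ insert i (S.erase i), (A j)ᶜ) = ⋂ j ∈ S, (A j)ᶜ := by
            rw [Finset.insert_erase hi]
          calc (0 : ℝ≥0∞) < (1 - x) * μ (⋂ j ∈ S.erase i, (A j)ᶜ) := h3
            _ ≤ μ (⋂ j ∈ insert i (S.erase i), (A j)ᶜ) := h2
            _ = μ (⋂ j ∈ S, (A j)ᶜ) := by rw [h4]
      refine ⟨hpos, fun i => ?_⟩
      set S₁ := S ∩ D i with hS₁
      set S₂ := S \ D i with hS₂
      have hS2sub : S₂ ⊆ S := Finset.sdiff_subset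
      have hS1sub : S₁ ⊆ S := Finset.inter_subset_left
      have hBpos2 : 0 < μ (⋂ j ∈ S₂, (A j)ᶜ) :=
        lt_of_lt_of_le hpos (measure_mono (hBmono hS2sub))
      -- conditional bound gives the numerator estimate
      have hcond' := hcond i S₂ Finset.sdiff_disjoint hBpos2
      rw [ProbabilityTheory.cond_apply (hmB S₂)] at hcond'
      have hnum : μ (A i ∩ ⋂ j ∈ S₂, (A j)ᶜ) ≤ p * μ (⋂ j ∈ S₂, (A j)ᶜ) := by
        have hmul := mul_le_mul_right hcond' (μ (⋂ j ∈ S₂, (A j)ᶜ))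
        rw [← mul_assoc, ENNReal.mul_inv_cancel hBpos2.ne' (measure_ne_top μ _),
          one_mul] at hmul
        calc μ (A i ∩ ⋂ j ∈ S₂, (A j)ᶜ)
            = μ ((⋂ j ∈ S₂, (A j)ᶜ) ∩ A i) := by rw [Set.inter_comm]
          _ ≤ μ (⋂ j ∈ S₂, (A j)ᶜ) * p := hmul
          _ = p * μ (⋂ j ∈ S₂, (A j)ᶜ) := mul_comm _ _
      -- peeling: intersecting with events in S₁ loses at most a (1-x) factor each
      have hpeel : ∀ T : Finset (Fin n), T ⊆ S₁ →
          (1 - x) ^ T.card * μ (⋂ j ∈ S₂, (A j)ᶜ) ≤ μ (⋂ j ∈ S₂ ∪ T, (A j)ᶜ) := by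
        intro T
        induction T using Finset.induction with
        | empty => intro _; simp
        | @insert j T hj ihT =>
          intro hsub
          have hjS1 : j ∈ S₁ := hsub (Finset.mem_insert_self j T)
          have hTsub : T ⊆ S₁ := (Finset.insert_subset_iff.mp hsub).2
          have hjD : j ∈ D i := (Finset.mem_inter.mp hjS1).2
          have hjS : j ∈ S := (Finset.mem_inter.mp hjS1).1
          have hsubS : S₂ ∪ T ⊆ S :=
            Finset.union_subset hS2sub (hTsub.trans hS1sub)
          have hjnot : j ∉ S₂ ∪ T := by
            rw [Finset.mem_union]
            push_neg
            exact ⟨fun hmem => (Finset.mem_sdiff.mp hmem).2 hjD, hj⟩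
          have hssub : S₂ ∪ T ⊂ S :=
            (Finset.ssubset_iff_of_subset hsubS).mpr ⟨j, hjS, hjnot⟩
          obtain ⟨hpos', hbd'⟩ := ih _ hssub
          calc (1 - x) ^ (insert j T).card * μ (⋂ j' ∈ S₂, (A j')ᶜ)
              = (1 - x) * ((1 - x) ^ T.card * μ (⋂ j' ∈ S₂, (A j')ᶜ)) := by
                rw [Finset.card_insert_of_notMem hj, pow_succ]; ring
            _ ≤ (1 - x) * μ (⋂ j' ∈ S₂ ∪ T, (A j')ᶜ) :=
                mul_le_mul_right (ihT hTsub) _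
            _ ≤ μ (⋂ j' ∈ insert j (S₂ ∪ T), (A j')ᶜ) := key j (S₂ ∪ T) (hbd' j)
            _ = μ (⋂ j' ∈ S₂ ∪ insert j T, (A j')ᶜ) := by rw [Finset.union_insert]
      have hcards : S₁.card ≤ d :=
        le_trans (Finset.card_le_card Finset.inter_subset_right) (hD i)
      have hpow : (1 - x) ^ d ≤ (1 - x) ^ S₁.card :=
        pow_le_pow_of_le_one zero_le h1x_le1 hcards
      calc μ (A i ∩ ⋂ j ∈ S, (A j)ᶜ)
          ≤ μ (A i ∩ ⋂ j ∈ S₂, (A j)ᶜ) :=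
            measure_mono (Set.inter_subset_inter_right _ (hBmono hS2sub))
        _ ≤ p * μ (⋂ j ∈ S₂, (A j)ᶜ) := hnum
        _ ≤ (x * (1 - x) ^ d) * μ (⋂ j ∈ S₂, (A j)ᶜ) := mul_le_mul_left hp _
        _ ≤ (x * (1 - x) ^ S₁.card) * μ (⋂ j ∈ S₂, (A j)ᶜ) :=
            mul_le_mul_left (mul_le_mul_right hpow _) _
        _ = x * ((1 - x) ^ S₁.card * μ (⋂ j ∈ S₂, (A j)ᶜ)) := by ring
        _ ≤ x * μ (⋂ j ∈ S₂ ∪ S₁, (A j)ᶜ) :=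
            mul_le_mul_right (hpeel S₁ Finset.Subset.rfl) _
        _ = x * μ (⋂ j ∈ S, (A j)ᶜ) := by rw [Finset.sdiff_union_inter]
  have hfin := (main Finset.univ).1
  have huniv : (⋂ j ∈ (Finset.univ : Finset (Fin n)), (A j)ᶜ) = ⋂ i, (A i)ᶜ := by simp
  rwa [huniv] at hfin
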